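/- For every ε > 0 there is a positive integer k = k(ε) such that: for any matrix A = (a_{ij}), i ∈ I, j ∈ J, with 0 ≤ a_{ij} ≤ 1 for all i, j and finite rank, there exists a nonnegative matrix A' = (a'_{ij}) with |a_{ij} − a'_{ij}| ≤ ε for all i, j and rank_psd A' ≤ C(k + rank A, k). -/

import Mathlib

open Finset Polynomial Matrix

private def Phi14 {n k : ℕ} (t : Σ m : Fin (k+1), (Fin (m : ℕ) → Fin n)) :
    Sym (Fin (n+1)) k :=
  ⟨Multiset.replicate (k - (t.1 : ℕ)) 0 + Finset.univ.val.map (Fin.succ ∘ t.2), by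
    have := t.1.is_le
    simp
    omega⟩

private def Yf14 {n k : ℕ} (w : Fin n → ℝ) (σ : Sym (Fin (n+1)) k) : ℝ :=
  (σ.1.map (Fin.cases 1 w)).prod

private lemma Yf14_Phi {n k : ℕ} (w : Fin n → ℝ)
    (t : Σ m : Fin (k+1), (Fin (m : ℕ) → Fin n)) :
    Yf14 w (Phi14 t) = ∏ s, w (t.2 s) := by
  simp only [Yf14, Phi14, Multiset.map_add, Multiset.prod_add, Multiset.map_replicate,
    Multiset.prod_replicate, Multiset.map_map]
  simp [Finset.prod, Function.comp_def]

private def Xf14 {n k : ℕ} (c : ℕ → ℝ) (w : Fin n → ℝ) (σ : Sym (Fin (n+1)) k) : ℝ :=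
  ∑ t ∈ univ.filter (fun t => Phi14 t = σ), c (t.1 : ℕ) * ∏ s, w (t.2 s)

private lemma key14 {n k : ℕ} (c : ℕ → ℝ) (u v : Fin n → ℝ) :
    ∑ m ∈ range (k+1), c m * (∑ t, u t * v t) ^ m
      = ∑ σ : Sym (Fin (n+1)) k, Xf14 c u σ * Yf14 v σ := by
  have h1 : ∀ σ : Sym (Fin (n+1)) k, Xf14 c u σ * Yf14 v σ
      = ∑ t ∈ univ.filter (fun t => Phi14 t = σ),
          (c (t.1 : ℕ) * ∏ s, u (t.2 s)) * Yf14 v (Phi14 t) := by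
    intro σ
    rw [Xf14, Finset.sum_mul]
    exact Finset.sum_congr rfl fun t ht => by rw [(Finset.mem_filter.mp ht).2]
  simp_rw [h1]
  rw [Finset.sum_fiberwise]
  rw [← Fin.sum_univ_eq_sum_range, ← Finset.univ_sigma_univ, Finset.sum_sigma]
  refine Finset.sum_congr rfl fun m _ => ?_
  rw [Fintype.sum_pow, Finset.mul_sum]
  refine Finset.sum_congr rfl fun f _ => ?_
  rw [Yf14_Phi (t := ⟨m, f⟩), Finset.prod_mul_distrib]
  exact (mul_assoc _ _ _).symm

theorem stmt14 (ε : ℝ) (hε : 0 < ε) :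
    ∃ k : ℕ, ∀ (I J : Type) (a : I → J → ℝ),
      (∀ i j, 0 ≤ a i j ∧ a i j ≤ 1) →
      ∀ (n : ℕ) (u : I → Fin n → ℝ) (v : J → Fin n → ℝ),
        (∀ i j, a i j = ∑ t, u i t * v j t) →
        ∃ a' : I → J → ℝ,
          (∀ i j, 0 ≤ a' i j ∧ |a i j - a' i j| ≤ ε) ∧
          ∃ (U : I → Matrix (Fin ((k + n).choose k)) (Fin ((k + n).choose k)) ℝ)
            (V : J → Matrix (Fin ((k + n).choose k)) (Fin ((k + n).choose k)) ℝ),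
            (∀ i, (U i).PosSemidef) ∧ (∀ j, (V j).PosSemidef) ∧
            ∀ i j, a' i j = ∑ p, ∑ q, U i p q * V j p q := by
  set δ : ℝ := min (ε / 3) 1 with hδdef
  have hδ : 0 < δ := lt_min (by linarith) one_pos
  obtain ⟨p, hp⟩ := exists_polynomial_near_of_continuousOn 0 1 Real.sqrt
    (Real.continuous_sqrt.continuousOn) δ hδ
  refine ⟨p.natDegree, ?_⟩
  intro I J a ha n u v hav
  set k := p.natDegree with hk
  refine ⟨fun i j => (p.eval (a i j)) ^ 2, ?_, ?_⟩
  · intro i j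
    refine ⟨sq_nonneg _, ?_⟩
    have hmem : a i j ∈ Set.Icc (0:ℝ) 1 := ⟨(ha i j).1, (ha i j).2⟩
    set s := Real.sqrt (a i j) with hsdef
    set q := p.eval (a i j) with hqdef
    have h1 : |q - s| < δ := hp (a i j) hmem
    have hs : s ^ 2 = a i j := Real.sq_sqrt (ha i j).1
    have hs0 : 0 ≤ s := Real.sqrt_nonneg _
    have hs1 : s ≤ 1 := Real.sqrt_le_one.mpr (ha i j).2
    have hδ1 : δ ≤ 1 := min_le_right _ _
    have hδε : δ ≤ ε / 3 := min_le_left _ _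
    have h3 : |s - q| ≤ δ := by rw [abs_sub_comm]; exact le_of_lt h1
    have h4 : |q| ≤ 1 + δ := by
      calc |q| = |(q - s) + s| := by ring_nf
        _ ≤ |q - s| + |s| := abs_add_le _ _
        _ ≤ δ + 1 := by
            have : |s| ≤ 1 := by rw [abs_of_nonneg hs0]; exact hs1
            linarith [le_of_lt h1]
        _ = 1 + δ := by ring
    have h5 : |s + q| ≤ 3 := by
      calc |s + q| ≤ |s| + |q| := abs_add_le _ _
        _ ≤ 1 + (1 + δ) := by
            have : |s| ≤ 1 := by rw [abs_of_nonneg hs0]; exact hs1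
            linarith
        _ ≤ 3 := by linarith
    show |a i j - q ^ 2| ≤ ε
    calc |a i j - q ^ 2| = |(s + q) * (s - q)| := by rw [← hs, ← sq_sub_sq]
      _ = |s + q| * |s - q| := abs_mul _ _
      _ ≤ 3 * δ := mul_le_mul h5 h3 (abs_nonneg _) (by norm_num)
      _ ≤ ε := by linarith
  · -- the PSD factorization
    have hcard : Fintype.card (Sym (Fin (n+1)) k) = (k + n).choose k := by
      rw [Sym.card_sym_eq_choose, Fintype.card_fin]
      congr 1
      omega
    let e : Sym (Fin (n+1)) k ≃ Fin ((k + n).choose k) :=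
      Fintype.equivFinOfCardEq hcard
    let X : I → Fin ((k + n).choose k) → ℝ :=
      fun i q => Xf14 (fun m => p.coeff m) (u i) (e.symm q)
    let Y : J → Fin ((k + n).choose k) → ℝ :=
      fun j q => Yf14 (v j) (e.symm q)
    have heval : ∀ i j, p.eval (a i j) = ∑ q, X i q * Y j q := by
      intro i j
      rw [Polynomial.eval_eq_sum_range' (Nat.lt_succ_self k), hav i j,
        key14 (fun m => p.coeff m) (u i) (v j)]
      exact (Equiv.sum_comp e.symm fun σ =>
        Xf14 (fun m => p.coeff m) (u i) σ * Yf14 (v j) σ).symm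
    let M : I → Matrix (Fin ((k + n).choose k)) (Fin ((k + n).choose k)) ℝ :=
      fun i => Matrix.of fun r s => X i r * X i s
    let W : J → Matrix (Fin ((k + n).choose k)) (Fin ((k + n).choose k)) ℝ :=
      fun j => Matrix.of fun r s => Y j r * Y j s
    have hM : ∀ i, (M i).PosSemidef := by
      intro i
      refine Matrix.PosSemidef.of_dotProduct_mulVec_nonneg ?_ ?_
      · ext r s
        simp [M, Matrix.conjTranspose_apply, mul_comm]
      · intro x
        have hdp : dotProduct (star x) ((M i) *ᵥ x)
            = (∑ r, X i r * x r) ^ 2 := by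
          simp only [M, Matrix.mulVec, dotProduct, star_trivial, Matrix.of_apply]
          rw [sq, Finset.sum_mul_sum]
          refine Finset.sum_congr rfl fun r _ => ?_
          rw [Finset.mul_sum]
          exact Finset.sum_congr rfl fun t _ => by ring
        rw [hdp]
        exact sq_nonneg _
    have hW : ∀ j, (W j).PosSemidef := by
      intro j
      refine Matrix.PosSemidef.of_dotProduct_mulVec_nonneg ?_ ?_
      · ext r s
        simp [W, Matrix.conjTranspose_apply, mul_comm]
      · intro x
        have hdp : dotProduct (star x) ((W j) *ᵥ x)
            = (∑ r, Y j r * x r) ^ 2 := by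
          simp only [W, Matrix.mulVec, dotProduct, star_trivial, Matrix.of_apply]
          rw [sq, Finset.sum_mul_sum]
          refine Finset.sum_congr rfl fun r _ => ?_
          rw [Finset.mul_sum]
          exact Finset.sum_congr rfl fun t _ => by ring
        rw [hdp]
        exact sq_nonneg _
    refine ⟨M, W, hM, hW, ?_⟩
    intro i j
    show (p.eval (a i j)) ^ 2 = _
    rw [heval i j, sq, Finset.sum_mul_sum]
    refine Finset.sum_congr rfl fun r _ => ?_
    refine Finset.sum_congr rfl fun t _ => ?_
    show X i r * Y j r * (X i t * Y j t) = X i r * X i t * (Y j r * Y j t)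
    ring
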